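/- arXiv:2504.14937 — 5 statements merged into one kernel-verified Lean document; each statement's English description precedes it below -/
import Mathlib

section
/- Let G be a DAG and let V, U be two distinct vertices of G. Let H_{VU} denote the graph that results from G by contracting V and U into a single vertex. Then H_{VU} contains a directed cycle if and only if G contains a directed path P from V to U (or from U to V) of length at least 2. -/
/-!
STATEMENT 0: Let `G` be a DAG and `V, U` two distinct vertices.  Let `H_{VU}` be the
graph obtained from `G` by contracting `V` and `U` into a single vertex.  Then `H_{VU}`
contains a directed cycle iff `G` contains a directed path from `V` to `U` (or from `U`
to `V`) of length at least `2`.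

We model a directed graph on a finite vertex type `α` by its edge relation
`E : α → α → Prop` (edges join distinct vertices, which follows from acyclicity).
The contraction of `v` and `u` is modelled on the same type, with `v` serving as the
new merged vertex and `u` deleted (no edges of the contracted graph touch `u`).
A directed cycle is a nonempty closed directed walk, i.e. `Relation.TransGen E w w`
for some vertex `w`; a directed path from `a` to `b` of length `≥ 2` is witnessed by
`∃ w, E a w ∧ Relation.TransGen E w b`.
-/

namespace CausalDAGSummary

variable {α : Type*}

/-- The edge relation of the graph obtained by contracting the two distinct vertices
`v` and `u` into a single vertex: the merged vertex is represented by `v`, the vertex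
`u` is removed, the merged vertex inherits all edges of `v` and of `u` to/from the
remaining vertices, any edge between `v` and `u` is removed, and edges among the other
vertices are kept. -/
def contractE (E : α → α → Prop) (v u : α) : α → α → Prop := fun a b =>
  a ≠ u ∧ b ≠ u ∧ a ≠ b ∧
    ((a = v ∧ (E v b ∨ E u b)) ∨ (b = v ∧ (E a v ∨ E a u)) ∨
      (a ≠ v ∧ b ≠ v ∧ E a b))

/-- A directed graph (edge relation) is a DAG when it has no directed cycle. -/
def IsDAG (E : α → α → Prop) : Prop := ∀ a, ¬ Relation.TransGen E a a

/-- split a walk not through `V` at endpoints into a restricted walk or one through `V`. -/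
lemma through (H : α → α → Prop) (V : α) :
    ∀ a b, Relation.TransGen H a b → a ≠ V → b ≠ V →
      Relation.TransGen (fun x y => H x y ∧ x ≠ V ∧ y ≠ V) a b ∨
        (Relation.TransGen H a V ∧ Relation.TransGen H V b) := by
  intro a b h
  induction h using Relation.TransGen.head_induction_on with
  | single h => intro ha hb; exact Or.inl (.single ⟨h, ha, hb⟩)
  | head h' h ih =>
    rename_i x z
    intro hx hb
    by_cases hz : z = V
    · subst hz; exact Or.inr ⟨.single h', h⟩
    · rcases ih hz hb with h1 | ⟨h1, h2⟩
      · exact Or.inl (h1.head ⟨h', hx, hz⟩)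
      · exact Or.inr ⟨h1.head h', h2⟩

lemma lemA (H : α → α → Prop) (V : α) :
    ∀ y, Relation.TransGen H y V → y ≠ V →
      Relation.TransGen (fun x z => H x z ∧ x ≠ V) y V := by
  intro y h
  induction h using Relation.TransGen.head_induction_on with
  | single h => intro hy; exact .single ⟨h, hy⟩
  | head h' h ih =>
    rename_i x z
    intro hx
    by_cases hz : z = V
    · subst hz; exact .single ⟨h', hx⟩
    · exact (ih hz).head ⟨h', hx⟩

lemma lemB (E : α → α → Prop) (V U : α) :
    ∀ x, Relation.TransGen (fun a b => contractE E V U a b ∧ a ≠ V) x V →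
      Relation.TransGen E x V ∨ Relation.TransGen E x U := by
  intro x h
  induction h using Relation.TransGen.head_induction_on with
  | single h =>
    obtain ⟨⟨_, _, _, disj⟩, hxV⟩ := h
    rcases disj with ⟨rfl, _⟩ | ⟨_, hE⟩ | ⟨_, hbV, _⟩
    · exact absurd rfl hxV
    · exact hE.imp .single .single
    · exact absurd rfl hbV
  | head h' h ih =>
    rename_i x z
    have hz : z ≠ V := by
      obtain ⟨c, ⟨_, hz⟩, _⟩ := Relation.TransGen.head'_iff.mp h
      exact hz
    obtain ⟨⟨hxU, hzU, hxz, disj⟩, hxV⟩ := h'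
    rcases disj with ⟨rfl, _⟩ | ⟨rfl, _⟩ | ⟨_, _, hE⟩
    · exact absurd rfl hxV
    · exact absurd rfl hz
    · exact ih.imp (.head hE) (.head hE)

lemma lemD (E : α → α → Prop) (hG : IsDAG E) (V U : α) (hVU : V ≠ U) :
    ∀ x, Relation.TransGen E x U → x ≠ U → x ≠ V → ¬ Relation.TransGen E x V →
      Relation.TransGen (contractE E V U) x V := by
  intro x h
  induction h using Relation.TransGen.head_induction_on with
  | single h =>
    intro hxU hxV _
    exact .single ⟨hxU, hVU, hxV, Or.inr (Or.inl ⟨rfl, Or.inr h⟩)⟩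
  | head h' h ih =>
    rename_i x z
    intro hxU hxV hnxV
    by_cases hzU : z = U
    · subst hzU
      exact .single ⟨hxU, hVU, hxV, Or.inr (Or.inl ⟨rfl, Or.inr h'⟩)⟩
    · by_cases hzV : z = V
      · subst hzV; exact absurd (.single h') hnxV
      · have hnzV : ¬ Relation.TransGen E z V := fun hc => hnxV (hc.head h')
        have hxz : x ≠ z := fun hc => by subst hc; exact hG x (.single h')
        exact (ih hzU hzV hnzV).head
          ⟨hxU, hzU, hxz, Or.inr (Or.inr ⟨hxV, hzV, h'⟩)⟩

lemma lemD' (E : α → α → Prop) (hG : IsDAG E) (V U : α) (hVU : V ≠ U) :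
    ∀ x, Relation.TransGen E x V → x ≠ U → x ≠ V → ¬ Relation.TransGen E x U →
      Relation.TransGen (contractE E V U) x V := by
  intro x h
  induction h using Relation.TransGen.head_induction_on with
  | single h =>
    intro hxU hxV _
    exact .single ⟨hxU, hVU, hxV, Or.inr (Or.inl ⟨rfl, Or.inl h⟩)⟩
  | head h' h ih =>
    rename_i x z
    intro hxU hxV hnxU
    by_cases hzV : z = V
    · subst hzV
      exact .single ⟨hxU, hVU, hxV, Or.inr (Or.inl ⟨rfl, Or.inl h'⟩)⟩
    · by_cases hzU : z = U
      · subst hzU; exact absurd (.single h') hnxU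
      · have hnzU : ¬ Relation.TransGen E z U := fun hc => hnxU (hc.head h')
        have hxz : x ≠ z := fun hc => by subst hc; exact hG x (.single h')
        exact (ih hzU hzV hnzU).head
          ⟨hxU, hzU, hxz, Or.inr (Or.inr ⟨hxV, hzV, h'⟩)⟩

theorem contraction_acyclic_iff {α : Type*} [Fintype α]
    (E : α → α → Prop) (hG : IsDAG E) (V U : α) (hVU : V ≠ U) :
    (∃ w, Relation.TransGen (contractE E V U) w w) ↔
      ((∃ w, E V w ∧ Relation.TransGen E w U) ∨
        (∃ w, E U w ∧ Relation.TransGen E w V)) := by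
  set H := contractE E V U with hH
  constructor
  · rintro ⟨w, hw⟩
    have hVV : Relation.TransGen H V V := by
      by_cases hwV : w = V
      · exact hwV ▸ hw
      · rcases through H V w w hw hwV hwV with h1 | ⟨h1, h2⟩
        · exfalso
          refine hG w (Relation.TransGen.mono ?_ _ _ h1)
          rintro a b ⟨⟨_, _, _, disj⟩, haV, hbV⟩
          rcases disj with ⟨rfl, _⟩ | ⟨rfl, _⟩ | ⟨_, _, hE⟩
          · exact absurd rfl haV
          · exact absurd rfl hbV
          · exact hE
        · exact h2.trans h1
    obtain ⟨x, hVx, hxV0⟩ := Relation.TransGen.head'_iff.mp hVV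
    · obtain ⟨_, hxU, hVx', disj⟩ := hVx
      have hxne : x ≠ V := hVx'.symm
      have hxV : Relation.TransGen H x V := by
        rcases Relation.reflTransGen_iff_eq_or_transGen.mp hxV0 with hc | hc
        · exact absurd hc.symm hxne
        · exact hc
      have hE : E V x ∨ E U x := by
        rcases disj with ⟨_, hE⟩ | ⟨hc, _⟩ | ⟨hc, _, _⟩
        · exact hE
        · exact absurd hc hxne
        · exact absurd rfl hc
      have := lemB E V U x (lemA H V x hxV hxne)
      rcases hE with hE | hE <;> rcases this with h1 | h1
      · exact absurd (h1.head hE) (hG V)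
      · exact Or.inl ⟨x, hE, h1⟩
      · exact Or.inr ⟨x, hE, h1⟩
      · exact absurd (h1.head hE) (hG U)
  · rintro (⟨w, hVw, hwU⟩ | ⟨w, hUw, hwV⟩)
    · have hwU' : w ≠ U := fun hc => hG U (hc ▸ hwU)
      have hwV' : w ≠ V := fun hc => hG V (Relation.TransGen.single (hc ▸ hVw))
      have hn : ¬ Relation.TransGen E w V := fun hc => hG V (hc.head hVw)
      have h1 : Relation.TransGen H w V := lemD E hG V U hVU w hwU hwU' hwV' hn
      exact ⟨V, h1.head ⟨hVU, hwU', hwV'.symm, Or.inl ⟨rfl, Or.inl hVw⟩⟩⟩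
    · have hwU' : w ≠ U := fun hc => hG U (Relation.TransGen.single (hc ▸ hUw))
      have hwV' : w ≠ V := fun hc => hG V (hc ▸ hwV)
      have hn : ¬ Relation.TransGen E w U := fun hc => hG U (hc.head hUw)
      have h1 : Relation.TransGen H w V := lemD' E hG V U hVU w hwV hwU' hwV' hn
      exact ⟨V, h1.head ⟨hVU, hwU', hwV'.symm, Or.inl ⟨rfl, Or.inr hUw⟩⟩⟩

end CausalDAGSummary
end

section
/- Let (H,f) be a summary DAG of a DAG G with a fixed complete topological order of V(G), and let G_H be the associated canonical causal DAG. Then the recursive basis of H and the recursive basis of G_H are equivalent: every conditional-independence statement in Sigma_RB(G_H) is implied by Sigma_RB(H) and vice versa. In particular, for every joint probability distribution P over random variables indexed by V(G), P satisfies all conditional-independence statements of Sigma_RB(H) (with each cluster node of H interpreted as the joint random vector of its constituent variables) if and only if P satisfies all conditional-independence statements of Sigma_RB(G_H). -/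
/-!
STATEMENT 7: Let `(H, f)` be a summary DAG of a DAG `G` with a fixed complete
topological order of `V(G)`, and let `G_H` be the associated canonical causal DAG.
Then the recursive basis of `H` and the recursive basis of `G_H` are equivalent:
every conditional-independence statement in `Σ_RB(G_H)` is implied (derivable via the
semi-graphoid axioms) from `Σ_RB(H)` and vice versa.  In particular, for every joint
probability distribution `P` over random variables indexed by `V(G)`, `P` satisfies
all conditional-independence statements of `Σ_RB(H)` (each cluster node of `H`
interpreted as the joint random vector of its constituent variables) iff `P`
satisfies all conditional-independence statements of `Σ_RB(G_H)`.

We model `V(G)` as `Fin n` with the natural order as the fixed complete topological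
order, and `V(H)` as `Fin m` with the natural order as a complete topological order
of `H`; the surjection `f : Fin n → Fin m` is monotone, so that the natural order of
`Fin n` is simultaneously a complete topological order for the canonical causal DAG
`G_H` (clusters listed consecutively, in the order of `H`).
-/

namespace CausalDAGSummary

open MeasureTheory ProbabilityTheory

/-- A conditional-independence statement `(A ⊥ B | C)` over variables of type `V`. -/
structure CI (V : Type*) where
  A : Set V
  B : Set V
  C : Set V

/-- Derivability of a conditional-independence statement from a set of such
statements via the semi-graphoid axioms (triviality, symmetry, decomposition,
weak union, contraction). -/
inductive SGDerives {V : Type*} (S : Set (CI V)) : CI V → Prop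
  | mem (ci : CI V) : ci ∈ S → SGDerives S ci
  | triviality (A C : Set V) : SGDerives S ⟨A, ∅, C⟩
  | symmetry (A B C : Set V) : SGDerives S ⟨A, B, C⟩ → SGDerives S ⟨B, A, C⟩
  | decomposition (A B D C : Set V) :
      SGDerives S ⟨A, B ∪ D, C⟩ → SGDerives S ⟨A, B, C⟩
  | weakUnion (A B D C : Set V) :
      SGDerives S ⟨A, B ∪ D, C⟩ → SGDerives S ⟨A, B, C ∪ D⟩
  | contraction (A B D C : Set V) :
      SGDerives S ⟨A, B, C⟩ → SGDerives S ⟨A, D, B ∪ C⟩ →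
      SGDerives S ⟨A, B ∪ D, C⟩

/-- The edge relation of the canonical causal DAG `G_H` associated with the summary
DAG `(H, f)` of `G` and the complete topological order on `Fin n`. -/
def canonicalE {n m : ℕ} (E : Fin n → Fin n → Prop)
    (EH : Fin m → Fin m → Prop) (f : Fin n → Fin m) : Fin n → Fin n → Prop :=
  fun i j => E i j ∨ EH (f i) (f j) ∨ (f i = f j ∧ i < j)

/-- `Σ_RB(G_H)`: the recursive basis of the canonical causal DAG, a set of
conditional-independence statements over the original variables. -/
def RBCanonical {n m : ℕ} (E : Fin n → Fin n → Prop)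
    (EH : Fin m → Fin m → Prop) (f : Fin n → Fin m) : Set (CI (Fin n)) :=
  {ci | ∃ i : Fin n,
    ci = ⟨{i}, {j | j < i ∧ ¬ canonicalE E EH f j i}, {j | canonicalE E EH f j i}⟩}

/-- `Σ_RB(H)`: the recursive basis of the summary DAG `H`, with each cluster node of
`H` interpreted as the set of original variables it represents. -/
def RBSummary {n m : ℕ} (EH : Fin m → Fin m → Prop) (f : Fin n → Fin m) :
    Set (CI (Fin n)) :=
  {ci | ∃ h : Fin m,
    ci = ⟨f ⁻¹' {h}, {x | f x < h ∧ ¬ EH (f x) h}, {x | EH (f x) h}⟩}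

/-- The σ-algebra generated by the random vector `(X i)_{i ∈ S}`. -/
def sigmaOn {n : ℕ} {Ω : Type*} (X : Fin n → Ω → ℝ) (S : Set (Fin n)) :
    MeasurableSpace Ω :=
  ⨆ i ∈ S, MeasurableSpace.comap (X i) inferInstance

/-- The joint distribution `μ` of the random variables `X` satisfies the
conditional-independence statement `ci`: the random vectors indexed by `ci.A` and
`ci.B` are conditionally independent given the one indexed by `ci.C`. -/
def SatCI {n : ℕ} {Ω : Type*} [MeasurableSpace Ω] [StandardBorelSpace Ω]
    (μ : Measure Ω) [IsFiniteMeasure μ]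
    (X : Fin n → Ω → ℝ) (hX : ∀ i, Measurable (X i)) (ci : CI (Fin n)) : Prop :=
  CondIndep (sigmaOn X ci.C) (sigmaOn X ci.A) (sigmaOn X ci.B)
    (iSup_le fun i => iSup_le fun _ => (hX i).comap_le) μ


section MeasureAux

variable {Ω : Type*} {m' m₁ m₂ m₃ : MeasurableSpace Ω} {mΩ : MeasurableSpace Ω}
  [StandardBorelSpace Ω] {μ : Measure Ω} [IsFiniteMeasure μ]


lemma sup_eq_generateFrom_inter (m₂ m' : MeasurableSpace Ω) :
    m₂ ⊔ m' = MeasurableSpace.generateFrom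
      {s | ∃ B C, MeasurableSet[m₂] B ∧ MeasurableSet[m'] C ∧ s = B ∩ C} := by
  apply le_antisymm
  · refine sup_le ?_ ?_
    · intro s hs
      exact MeasurableSpace.measurableSet_generateFrom
        ⟨s, Set.univ, hs, MeasurableSet.univ, (Set.inter_univ s).symm⟩
    · intro s hs
      exact MeasurableSpace.measurableSet_generateFrom
        ⟨Set.univ, s, MeasurableSet.univ, hs, (Set.univ_inter s).symm⟩
  · refine MeasurableSpace.generateFrom_le ?_
    rintro s ⟨B, C, hB, hC, rfl⟩
    exact MeasurableSet.inter ((le_sup_left : m₂ ≤ m₂ ⊔ m') B hB)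
      ((le_sup_right : m' ≤ m₂ ⊔ m') C hC)

lemma isPiSystem_inter_sets (m₂ m' : MeasurableSpace Ω) :
    IsPiSystem {s : Set Ω | ∃ B C, MeasurableSet[m₂] B ∧ MeasurableSet[m'] C ∧ s = B ∩ C} := by
  rintro s ⟨B, C, hB, hC, rfl⟩ t ⟨B', C', hB', hC', rfl⟩ -
  exact ⟨B ∩ B', C ∩ C', hB.inter hB', hC.inter hC', by
    ext x; simp only [Set.mem_inter_iff]; tauto⟩

lemma doob' (hm' : m' ≤ mΩ) (hm₁ : m₁ ≤ mΩ) (hm₂ : m₂ ≤ mΩ) :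
    CondIndep m' m₁ m₂ hm' μ ↔
      ∀ A, MeasurableSet[m₁] A → (μ⟦A | m₂ ⊔ m'⟧) =ᵐ[μ] (μ⟦A | m'⟧) := by
  have hsup : m₂ ⊔ m' ≤ mΩ := sup_le hm₂ hm'
  rw [condIndep_iff m' m₁ m₂ hm' hm₁ hm₂ μ]
  constructor
  · intro h A hA
    set f : Ω → ℝ := A.indicator (fun _ : Ω => (1:ℝ)) with hfdef
    have hfint : Integrable f μ := (integrable_const (1:ℝ)).indicator (hm₁ A hA)
    have key : ∀ s : Set Ω, MeasurableSet[m₂ ⊔ m'] s →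
        ∫ x in s, (μ[f|m']) x ∂μ = ∫ x in s, f x ∂μ := by
      intro s hs
      refine MeasurableSpace.induction_on_inter (m := m₂ ⊔ m')
        (C := fun s _ => ∫ x in s, (μ[f|m']) x ∂μ = ∫ x in s, f x ∂μ)
        (sup_eq_generateFrom_inter m₂ m') (isPiSystem_inter_sets m₂ m') (by simp) ?_ ?_ ?_ s hs
      · -- basic: s = B ∩ C
        rintro u ⟨B, C, hB, hC, rfl⟩
        have hBΩ : MeasurableSet[mΩ] B := hm₂ B hB
        have hCΩ : MeasurableSet[mΩ] C := hm' C hC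
        have hAΩ : MeasurableSet[mΩ] A := hm₁ A hA
        set g1B : Ω → ℝ := B.indicator (fun _ : Ω => (1:ℝ)) with hg1B
        have hBind : (μ[f|m']) * g1B = B.indicator (μ[f|m']) := by
          funext x
          by_cases hx : x ∈ B <;> simp [hg1B, Set.indicator_of_mem, Set.indicator_of_notMem, hx]
        have hmulint : Integrable ((μ[f|m']) * g1B) μ := by
          rw [hBind]; exact integrable_condExp.indicator hBΩ
        have hg1Bint : Integrable g1B μ := (integrable_const (1:ℝ)).indicator hBΩ
        have pull : μ[(μ[f|m']) * g1B|m'] =ᵐ[μ] (μ[f|m']) * (μ[g1B|m']) :=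
          condExp_mul_of_stronglyMeasurable_left stronglyMeasurable_condExp hmulint hg1Bint
        have hprod : (μ[f|m']) * (μ[g1B|m']) =ᵐ[μ] μ⟦A ∩ B|m'⟧ := (h A B hA hB).symm
        calc ∫ x in B ∩ C, (μ[f|m']) x ∂μ
            = ∫ x in C ∩ B, (μ[f|m']) x ∂μ := by rw [Set.inter_comm]
          _ = ∫ x in C, B.indicator (μ[f|m']) x ∂μ := (setIntegral_indicator hBΩ).symm
          _ = ∫ x in C, ((μ[f|m']) * g1B) x ∂μ := by rw [hBind]
          _ = ∫ x in C, (μ[(μ[f|m']) * g1B|m']) x ∂μ := (setIntegral_condExp hm' hmulint hC).symm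
          _ = ∫ x in C, (μ⟦A ∩ B|m'⟧) x ∂μ :=
              integral_congr_ae (ae_restrict_of_ae (pull.trans hprod))
          _ = ∫ x in C, (A ∩ B).indicator (fun _ => (1:ℝ)) x ∂μ :=
              setIntegral_condExp hm' ((integrable_const (1:ℝ)).indicator (hAΩ.inter hBΩ)) hC
          _ = ∫ x in C ∩ (A ∩ B), (fun _ => (1:ℝ)) x ∂μ := setIntegral_indicator (hAΩ.inter hBΩ)
          _ = ∫ x in (B ∩ C) ∩ A, (fun _ => (1:ℝ)) x ∂μ := by
              rw [show C ∩ (A ∩ B) = (B ∩ C) ∩ A by ext x; simp only [Set.mem_inter_iff]; tauto]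
          _ = ∫ x in B ∩ C, A.indicator (fun _ => (1:ℝ)) x ∂μ := (setIntegral_indicator hAΩ).symm
          _ = ∫ x in B ∩ C, f x ∂μ := rfl
      · -- compl
        intro t htm iht
        have htΩ : MeasurableSet[mΩ] t := hsup t htm
        have e1 := integral_add_compl htΩ (integrable_condExp : Integrable (μ[f|m']) μ)
        have e2 := integral_add_compl htΩ hfint
        have etot : ∫ x, (μ[f|m']) x ∂μ = ∫ x, f x ∂μ := integral_condExp hm'
        linarith
      · -- disjoint union
        intro g hdisj hmeas hC
        have hmeasΩ : ∀ i, MeasurableSet[mΩ] (g i) := fun i => hsup _ (hmeas i)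
        rw [integral_iUnion hmeasΩ hdisj integrable_condExp.integrableOn,
          integral_iUnion hmeasΩ hdisj hfint.integrableOn]
        exact tsum_congr hC
    exact (ae_eq_condExp_of_forall_setIntegral_eq hsup hfint
      (fun s _ _ => integrable_condExp.integrableOn)
      (fun s hs _ => key s hs)
      (((stronglyMeasurable_condExp (m := m') (μ := μ) (f := f)).mono (le_sup_right : m' ≤ m₂ ⊔ m')).aestronglyMeasurable)).symm
  · intro h t1 t2 ht1 ht2
    set f1 : Ω → ℝ := t1.indicator (fun _ : Ω => (1:ℝ)) with hf1
    set f2 : Ω → ℝ := t2.indicator (fun _ : Ω => (1:ℝ)) with hf2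
    have ht1Ω := hm₁ t1 ht1
    have ht2Ω := hm₂ t2 ht2
    have hf1int : Integrable f1 μ := (integrable_const (1:ℝ)).indicator ht1Ω
    have hf2int : Integrable f2 μ := (integrable_const (1:ℝ)).indicator ht2Ω
    have hind : (t1 ∩ t2).indicator (fun _ : Ω => (1:ℝ)) = f2 * f1 := by
      funext x
      by_cases h1 : x ∈ t1 <;> by_cases h2 : x ∈ t2 <;>
        simp [hf1, hf2, Set.indicator_of_mem, Set.indicator_of_notMem, h1, h2,
          Set.mem_inter_iff]
    have hf21int : Integrable (f2 * f1) μ := by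
      rw [← hind]; exact (integrable_const (1:ℝ)).indicator (ht1Ω.inter ht2Ω)
    have h1 : (μ⟦t1 | m₂ ⊔ m'⟧) =ᵐ[μ] (μ⟦t1 | m'⟧) := h t1 ht1
    have sm2 : StronglyMeasurable[m₂ ⊔ m'] f2 :=
      ((stronglyMeasurable_const : StronglyMeasurable[m₂] (fun _ : Ω => (1:ℝ))).indicator
        ht2).mono le_sup_left
    have pull1 : μ[f2 * f1|m₂ ⊔ m'] =ᵐ[μ] f2 * (μ[f1|m₂ ⊔ m']) :=
      condExp_mul_of_stronglyMeasurable_left sm2 hf21int hf1int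
    have step1 : μ[f2 * f1|m'] =ᵐ[μ] μ[f2 * (μ[f1|m'])|m'] := by
      refine (condExp_condExp_of_le le_sup_right hsup (f := f2 * f1)).symm.trans ?_
      refine condExp_congr_ae (pull1.trans ?_)
      exact Filter.EventuallyEq.mul (Filter.EventuallyEq.refl _ f2) h1
    have hmul2 : f2 * (μ[f1|m']) = t2.indicator (μ[f1|m']) := by
      funext x
      by_cases hx : x ∈ t2 <;> simp [hf2, Set.indicator_of_mem, Set.indicator_of_notMem, hx]
    have hmul2int : Integrable (f2 * (μ[f1|m'])) μ := by
      rw [hmul2]; exact integrable_condExp.indicator ht2Ω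
    have pull2 : μ[(μ[f1|m']) * f2|m'] =ᵐ[μ] (μ[f1|m']) * (μ[f2|m']) :=
      condExp_mul_of_stronglyMeasurable_left stronglyMeasurable_condExp
        (by rwa [mul_comm] at hmul2int) hf2int
    have hstart : μ⟦t1 ∩ t2|m'⟧ = μ[f2 * f1|m'] := by rw [hind]
    rw [hstart]
    refine step1.trans ?_
    rw [show f2 * (μ[f1|m']) = (μ[f1|m']) * f2 from mul_comm _ _]
    exact pull2

lemma condIndep_bot_right' (hm' : m' ≤ mΩ) : CondIndep m' m₁ ⊥ hm' μ :=
  Kernel.indep_bot_right m₁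

lemma condIndep_symm' (hm' : m' ≤ mΩ) (h : CondIndep m' m₁ m₂ hm' μ) :
    CondIndep m' m₂ m₁ hm' μ := Kernel.Indep.symm h

lemma condIndep_mono_right' (hm' : m' ≤ mΩ) (h23 : m₃ ≤ m₂)
    (h : CondIndep m' m₁ m₂ hm' μ) : CondIndep m' m₁ m₃ hm' μ := by
  intro t1 t2 h1 h2
  exact h _ _ h1 (h23 t2 h2)

lemma condIndep_weakUnion' (hm' : m' ≤ mΩ) (hm₁ : m₁ ≤ mΩ) (hm₂ : m₂ ≤ mΩ) (hm₃ : m₃ ≤ mΩ)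
    (h : CondIndep m' m₁ (m₂ ⊔ m₃) hm' μ) :
    CondIndep (m₃ ⊔ m') m₁ m₂ (sup_le hm₃ hm') μ := by
  rw [doob' (sup_le hm₃ hm') hm₁ hm₂]
  intro A hA
  have h1 := (doob' hm' hm₁ (sup_le hm₂ hm₃)).1 h A hA
  have h2 := (doob' hm' hm₁ hm₃).1 (condIndep_mono_right' hm' le_sup_right h) A hA
  rw [show m₂ ⊔ (m₃ ⊔ m') = (m₂ ⊔ m₃) ⊔ m' from (sup_assoc m₂ m₃ m').symm]
  exact h1.trans h2.symm

lemma condIndep_contraction' (hm' : m' ≤ mΩ) (hm₁ : m₁ ≤ mΩ) (hm₂ : m₂ ≤ mΩ) (hm₃ : m₃ ≤ mΩ)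
    (h1 : CondIndep m' m₁ m₂ hm' μ)
    (h2 : CondIndep (m₂ ⊔ m') m₁ m₃ (sup_le hm₂ hm') μ) :
    CondIndep m' m₁ (m₂ ⊔ m₃) hm' μ := by
  rw [doob' hm' hm₁ (sup_le hm₂ hm₃)]
  intro A hA
  have e1 := (doob' hm' hm₁ hm₂).1 h1 A hA
  have e2 := (doob' (sup_le hm₂ hm') hm₁ hm₃).1 h2 A hA
  rw [show (m₂ ⊔ m₃) ⊔ m' = m₃ ⊔ (m₂ ⊔ m') by
    rw [sup_assoc, sup_left_comm]]
  exact e2.trans e1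

lemma condIndep_congr {m'' : MeasurableSpace Ω} (e : m' = m'')
    (hm' : m' ≤ mΩ) (hm'' : m'' ≤ mΩ) (h : CondIndep m' m₁ m₂ hm' μ) :
    CondIndep m'' m₁ m₂ hm'' μ := by
  subst e
  exact h

lemma sg_sound {n : ℕ} {Ω : Type*} [mΩi : MeasurableSpace Ω] [StandardBorelSpace Ω]
    (μ : Measure Ω) [IsFiniteMeasure μ] (X : Fin n → Ω → ℝ) (hX : ∀ i, Measurable (X i))
    {S : Set (CI (Fin n))} {ci : CI (Fin n)} (hd : SGDerives S ci)
    (hS : ∀ c ∈ S, SatCI μ X hX c) : SatCI μ X hX ci := by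
  have hle : ∀ T : Set (Fin n), sigmaOn X T ≤ mΩi :=
    fun T => iSup_le fun i => iSup_le fun _ => (hX i).comap_le
  have hun : ∀ T U : Set (Fin n), sigmaOn X (T ∪ U) = sigmaOn X T ⊔ sigmaOn X U := by
    intro T U
    rw [sigmaOn, iSup_union]
    rfl
  have hbot : sigmaOn X (∅ : Set (Fin n)) = ⊥ := by
    rw [sigmaOn]
    exact iSup_emptyset
  induction hd with
  | mem c hc => exact hS c hc
  | triviality A C =>
    show CondIndep (sigmaOn X C) (sigmaOn X A) (sigmaOn X ∅) _ μ
    rw [hbot]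
    exact condIndep_bot_right' (hle C)
  | symmetry A B C h ihh =>
    show CondIndep (sigmaOn X C) (sigmaOn X B) (sigmaOn X A) (hle C) μ
    exact condIndep_symm' _ ihh
  | decomposition A B D C h ihh =>
    show CondIndep (sigmaOn X C) (sigmaOn X A) (sigmaOn X B) (hle C) μ
    have ih' : CondIndep (sigmaOn X C) (sigmaOn X A) (sigmaOn X (B ∪ D)) (hle C) μ := ihh
    exact condIndep_mono_right' _ (by rw [hun B D]; exact le_sup_left) ih'
  | weakUnion A B D C h ihh =>
    show CondIndep (sigmaOn X (C ∪ D)) (sigmaOn X A) (sigmaOn X B) (hle (C ∪ D)) μ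
    have ih2 : CondIndep (sigmaOn X C) (sigmaOn X A) (sigmaOn X B ⊔ sigmaOn X D)
        (hle C) μ := by
      have ih' : CondIndep (sigmaOn X C) (sigmaOn X A) (sigmaOn X (B ∪ D)) (hle C) μ := ihh
      rw [← hun B D]
      exact ih'
    exact condIndep_congr (by rw [hun C D, sup_comm]) _ _
      (condIndep_weakUnion' (hle C) (hle A) (hle B) (hle D) ih2)
  | contraction A B D C h1 h2 ih1 ih2 =>
    show CondIndep (sigmaOn X C) (sigmaOn X A) (sigmaOn X (B ∪ D)) (hle C) μ
    rw [hun B D]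
    have ih1' : CondIndep (sigmaOn X C) (sigmaOn X A) (sigmaOn X B) (hle C) μ := ih1
    have ih2' : CondIndep (sigmaOn X (B ∪ C)) (sigmaOn X A) (sigmaOn X D) (hle (B ∪ C)) μ := ih2
    refine condIndep_contraction' (hle C) (hle A) (hle B) (hle D) ih1' ?_
    exact condIndep_congr (hun B C) _ _ ih2'

end MeasureAux

section Comb
variable {n m : ℕ} (E : Fin n → Fin n → Prop)
  (EH : Fin m → Fin m → Prop)
  (f : Fin n → Fin m)

lemma flt (hmono : Monotone f) {j i : Fin n} (hji : f j < f i) : j < i := by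
  by_contra hc
  push_neg at hc
  exact absurd (hmono hc) (not_le.2 hji)

lemma Bset_eq (hmono : Monotone f) (hsummary : ∀ i j, E i j → f i = f j ∨ EH (f i) (f j)) (i : Fin n) : {j | j < i ∧ ¬ canonicalE E EH f j i}
    = {x | f x < f i ∧ ¬ EH (f x) (f i)} := by
  ext j
  simp only [Set.mem_setOf_eq, canonicalE]
  constructor
  · rintro ⟨hji, hnc⟩
    push_neg at hnc
    obtain ⟨hnE, hnEH, hneq⟩ := hnc
    have hne : f j ≠ f i := fun he => absurd hji (not_lt.2 (hneq he))
    exact ⟨lt_of_le_of_ne (hmono hji.le) hne, hnEH⟩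
  · rintro ⟨hlt, hnEH⟩
    refine ⟨flt f hmono hlt, ?_⟩
    rintro (hE | hEH | ⟨heq, _⟩)
    · rcases hsummary _ _ hE with he | hh
      · exact absurd he (ne_of_lt hlt)
      · exact hnEH hh
    · exact hnEH hEH
    · exact absurd heq (ne_of_lt hlt)

lemma Cset_eq (htopoG : ∀ i j, E i j → i < j) (hsummary : ∀ i j, E i j → f i = f j ∨ EH (f i) (f j)) (i : Fin n) : {j | canonicalE E EH f j i}
    = {x | EH (f x) (f i)} ∪ {x | f x = f i ∧ x < i} := by
  ext j
  simp only [Set.mem_setOf_eq, Set.mem_union, canonicalE]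
  constructor
  · rintro (hE | hEH | h)
    · rcases hsummary _ _ hE with he | hh
      · exact Or.inr ⟨he, htopoG _ _ hE⟩
      · exact Or.inl hh
    · exact Or.inl hEH
    · exact Or.inr h
  · rintro (hEH | h)
    · exact Or.inr (Or.inl hEH)
    · exact Or.inr (Or.inr h)

lemma dir1 (htopoG : ∀ i j, E i j → i < j) (hmono : Monotone f) (hsummary : ∀ i j, E i j → f i = f j ∨ EH (f i) (f j)) : ∀ ci ∈ RBCanonical E EH f, SGDerives (RBSummary EH f) ci := by
  rintro ci ⟨i, rfl⟩
  rw [Bset_eq E EH f hmono hsummary i, Cset_eq E EH f htopoG hsummary i]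
  have base : SGDerives (RBSummary EH f)
      ⟨f ⁻¹' {f i}, {x | f x < f i ∧ ¬ EH (f x) (f i)}, {x | EH (f x) (f i)}⟩ :=
    SGDerives.mem _ ⟨f i, rfl⟩
  have s1 := SGDerives.symmetry _ _ _ base
  have hsub : (({i} ∪ {x | f x = f i ∧ x < i}) ∪ f ⁻¹' {f i} : Set (Fin n)) = f ⁻¹' {f i} := by
    apply Set.union_eq_self_of_subset_left
    rintro x (hx | hx)
    · rcases Set.mem_singleton_iff.1 hx with rfl
      simp
    · simp [Set.mem_preimage, hx.1]
  have s2 : SGDerives (RBSummary EH f)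
      ⟨{x | f x < f i ∧ ¬ EH (f x) (f i)},
        ({i} ∪ {x | f x = f i ∧ x < i}) ∪ f ⁻¹' {f i}, {x | EH (f x) (f i)}⟩ := by
    rw [hsub]; exact s1
  have s3 := SGDerives.decomposition _ _ _ _ s2
  have s4 := SGDerives.weakUnion _ _ _ _ s3
  exact SGDerives.symmetry _ _ _ s4

lemma dir2_main (htopoG : ∀ i j, E i j → i < j) (hmono : Monotone f) (hsummary : ∀ i j, E i j → f i = f j ∨ EH (f i) (f j)) : ∀ N : ℕ, ∀ i : Fin n, (i : ℕ) < N →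
    SGDerives (RBCanonical E EH f)
      ⟨{x | f x = f i ∧ x ≤ i}, {x | f x < f i ∧ ¬ EH (f x) (f i)},
        {x | EH (f x) (f i)}⟩ := by
  intro N
  induction N with
  | zero => exact fun i hi => absurd hi (Nat.not_lt_zero _)
  | succ N ih =>
    intro i hiN
    have hstep1 : SGDerives (RBCanonical E EH f)
        ⟨{x | f x < f i ∧ ¬ EH (f x) (f i)}, {x | f x = f i ∧ x < i},
          {x | EH (f x) (f i)}⟩ := by
      by_cases hne : ∃ j : Fin n, f j = f i ∧ j < i
      · obtain ⟨j0, hj0⟩ := hne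
        set s : Finset (Fin n) := Finset.univ.filter (fun j => f j = f i ∧ j < i) with hs
        have hsne : s.Nonempty := ⟨j0, by simp [hs, hj0.1, hj0.2]⟩
        set i0 := s.max' hsne with hi0
        have hi0mem : i0 ∈ s := s.max'_mem hsne
        rw [hs, Finset.mem_filter] at hi0mem
        have hPQ : {x | f x = f i ∧ x < i} = {x | f x = f i ∧ x ≤ i0} := by
          ext x
          simp only [Set.mem_setOf_eq]
          constructor
          · rintro ⟨hfx, hxi⟩
            exact ⟨hfx, s.le_max' x (by simp [hs, hfx, hxi])⟩
          · rintro ⟨hfx, hxle⟩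
            exact ⟨hfx, lt_of_le_of_lt hxle hi0mem.2.2⟩
        have hlt0 : (i0 : ℕ) < N := by
          have h1 : (i0 : ℕ) < (i : ℕ) := hi0mem.2.2
          omega
        have ihW := ih i0 hlt0
        rw [hi0mem.2.1] at ihW
        rw [hPQ]
        exact SGDerives.symmetry _ _ _ ihW
      · push_neg at hne
        have hP : {x : Fin n | f x = f i ∧ x < i} = ∅ := by
          ext x
          simp only [Set.mem_setOf_eq, Set.mem_empty_iff_false, iff_false]
          rintro ⟨h1, h2⟩
          exact absurd h2 (not_lt.2 (hne x h1))
        rw [hP]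
        exact SGDerives.triviality _ _
    have hmem : SGDerives (RBCanonical E EH f)
        ⟨{i}, {x | f x < f i ∧ ¬ EH (f x) (f i)},
          {x | EH (f x) (f i)} ∪ {x | f x = f i ∧ x < i}⟩ := by
      have hb := SGDerives.mem (S := RBCanonical E EH f)
        ⟨{i}, {j | j < i ∧ ¬ canonicalE E EH f j i}, {j | canonicalE E EH f j i}⟩ ⟨i, rfl⟩
      rwa [Bset_eq E EH f hmono hsummary i, Cset_eq E EH f htopoG hsummary i] at hb
    have hsym := SGDerives.symmetry _ _ _ hmem
    have hsym' : SGDerives (RBCanonical E EH f)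
        ⟨{x | f x < f i ∧ ¬ EH (f x) (f i)}, {i},
          {x | f x = f i ∧ x < i} ∪ {x | EH (f x) (f i)}⟩ := by
      rwa [Set.union_comm] at hsym
    have hcontr := SGDerives.contraction _ _ _ _ hstep1 hsym'
    have hQ : {x | f x = f i ∧ x ≤ i} = {x | f x = f i ∧ x < i} ∪ {i} := by
      ext x
      simp only [Set.mem_setOf_eq, Set.mem_union, Set.mem_singleton_iff]
      constructor
      · rintro ⟨h1, h2⟩
        rcases lt_or_eq_of_le h2 with hl | hl
        · exact Or.inl ⟨h1, hl⟩
        · exact Or.inr hl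
      · rintro (⟨h1, h2⟩ | rfl)
        · exact ⟨h1, h2.le⟩
        · exact ⟨rfl, le_refl _⟩
    rw [hQ]
    exact SGDerives.symmetry _ _ _ hcontr

lemma dir2 (htopoG : ∀ i j, E i j → i < j) (hf : Function.Surjective f) (hmono : Monotone f) (hsummary : ∀ i j, E i j → f i = f j ∨ EH (f i) (f j)) : ∀ ci ∈ RBSummary EH f, SGDerives (RBCanonical E EH f) ci := by
  rintro ci ⟨h, rfl⟩
  obtain ⟨i0, hfi0⟩ := hf h
  set s : Finset (Fin n) := Finset.univ.filter (fun j => f j = h) with hs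
  have hsne : s.Nonempty := ⟨i0, by simp [hs, hfi0]⟩
  set imax := s.max' hsne with himax
  have hmem : imax ∈ s := s.max'_mem hsne
  rw [hs, Finset.mem_filter] at hmem
  have hQmax : f ⁻¹' {h} = {x | f x = f imax ∧ x ≤ imax} := by
    ext x
    simp only [Set.mem_preimage, Set.mem_singleton_iff, Set.mem_setOf_eq, hmem.2]
    constructor
    · intro hx
      exact ⟨hx, s.le_max' x (by simp [hs, hx])⟩
    · rintro ⟨hx, _⟩
      exact hx
  rw [hQmax, ← hmem.2]
  exact dir2_main E EH f htopoG hmono hsummary n imax imax.isLt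

end Comb
theorem recursiveBasis_summary_equiv_canonical {n m : ℕ}
    (E : Fin n → Fin n → Prop) (htopoG : ∀ i j, E i j → i < j)
    (EH : Fin m → Fin m → Prop) (htopoH : ∀ a b, EH a b → a < b)
    (f : Fin n → Fin m) (hf : Function.Surjective f) (hmono : Monotone f)
    (hsummary : ∀ i j, E i j → f i = f j ∨ EH (f i) (f j)) :
    (∀ ci ∈ RBCanonical E EH f, SGDerives (RBSummary EH f) ci) ∧
    (∀ ci ∈ RBSummary EH f, SGDerives (RBCanonical E EH f) ci) ∧
    (∀ (Ω : Type) [MeasurableSpace Ω] [StandardBorelSpace Ω]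
        (μ : Measure Ω) [IsProbabilityMeasure μ]
        (X : Fin n → Ω → ℝ) (hX : ∀ i, Measurable (X i)),
      (∀ ci ∈ RBSummary EH f, SatCI μ X hX ci) ↔
        (∀ ci ∈ RBCanonical E EH f, SatCI μ X hX ci)) := by
  have d1 := dir1 E EH f htopoG hmono hsummary
  have d2 := dir2 E EH f htopoG hf hmono hsummary
  refine ⟨d1, d2, ?_⟩
  intro Ω _ _ μ _ X hX
  constructor
  · intro hs ci hci
    exact sg_sound μ X hX (d1 ci hci) hs
  · intro hs ci hci
    exact sg_sound μ X hX (d2 ci hci) hs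

end CausalDAGSummary
end

section
/- Let (H,f) be a summary DAG for a DAG G, and let X, Y, Z be pairwise disjoint subsets of V(H). If X and Y are d-separated by Z in H, then for every causal DAG G' compatible with (H,f), the sets f^{-1}(X) and f^{-1}(Y) are d-separated by f^{-1}(Z) in G' (soundness of s-separation). -/
namespace CausalDAGSummary

variable {α : Type*}

/-- A trail in a directed graph: a sequence of vertices such that consecutive
vertices are joined by an edge (in one direction or the other), with distinct edges
used along the trail. -/
def IsTrail (E : α → α → Prop) (xs : List α) : Prop :=
  xs.Chain' (fun a b => E a b ∨ E b a) ∧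
    ((xs.zip xs.tail).map (fun p => Sym2.mk p)).Nodup

/-- The vertex at position `i` of the trail `xs` is head-to-head: both its
neighbouring edges along the trail point into it. -/
def HeadToHead (E : α → α → Prop) (xs : List α) (i : ℕ) : Prop :=
  ∃ (_ : 0 < i) (h2 : i + 1 < xs.length),
    E (xs.get ⟨i - 1, by omega⟩) (xs.get ⟨i, by omega⟩) ∧
      E (xs.get ⟨i + 1, h2⟩) (xs.get ⟨i, by omega⟩)

/-- A trail is active given `Z` if every head-to-head vertex of the trail belongs to
`Z` or has a descendant in `Z`, and every non-head-to-head vertex of the trail does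
not belong to `Z`. -/
def ActiveTrail (E : α → α → Prop) (Z : Set α) (xs : List α) : Prop :=
  IsTrail E xs ∧
    ∀ (i : ℕ) (hi : i < xs.length),
      (HeadToHead E xs i →
        ∃ d ∈ Z, Relation.ReflTransGen E (xs.get ⟨i, hi⟩) d) ∧
      (¬ HeadToHead E xs i → xs.get ⟨i, hi⟩ ∉ Z)

/-- `X` and `Y` are d-connected given `Z`: some active trail joins a vertex of `X`
to a vertex of `Y`. -/
def DConnected (E : α → α → Prop) (X Y Z : Set α) : Prop :=
  ∃ (xs : List α) (hne : xs ≠ []),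
    xs.head hne ∈ X ∧ xs.getLast hne ∈ Y ∧ ActiveTrail E Z xs

/-- `X` and `Y` are d-separated by `Z`: every trail between a vertex of `X` and a
vertex of `Y` is blocked given `Z`. -/
def DSeparated (E : α → α → Prop) (X Y Z : Set α) : Prop :=
  ¬ DConnected E X Y Z


section AuxiliaryWalks

variable {α : Type*} {β : Type*}

/-- Index-based head-to-head predicate for a walk `v 0, …, v n`. -/
def H2H (E : α → α → Prop) (n : ℕ) (v : ℕ → α) (i : ℕ) : Prop :=
  0 < i ∧ i < n ∧ E (v (i - 1)) (v i) ∧ E (v (i + 1)) (v i)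

/-- Index-based active walk `v 0, …, v n` (edges need not be distinct). -/
def IWalk (E : α → α → Prop) (Z : Set α) (n : ℕ) (v : ℕ → α) : Prop :=
  (∀ i < n, E (v i) (v (i + 1)) ∨ E (v (i + 1)) (v i)) ∧
  (∀ i, H2H E n v i → ∃ d ∈ Z, Relation.ReflTransGen E (v i) d) ∧
  (∀ i ≤ n, ¬ H2H E n v i → v i ∉ Z)

lemma iwalk_desc {E : α → α → Prop} {Z : Set α} {n : ℕ} {v : ℕ → α}
    (hw : IWalk E Z n v) :
    ∀ k p q, q - p = k → 0 < p → p ≤ q → q < n →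
      E (v (p - 1)) (v p) → E (v (q + 1)) (v q) →
      ∃ d ∈ Z, Relation.ReflTransGen E (v p) d := by
  intro k
  induction k with
  | zero =>
    intro p q hk hp hpq hq hl hr
    have hpq' : p = q := by omega
    subst hpq'
    exact hw.2.1 p ⟨hp, by omega, hl, hr⟩
  | succ k ih =>
    intro p q hk hp hpq hq hl hr
    have hpq' : p < q := by omega
    rcases hw.1 p (by omega) with h | h
    · have hl' : E (v ((p + 1) - 1)) (v (p + 1)) := by simpa using h
      obtain ⟨d, hd, hrtg⟩ := ih (p + 1) q (by omega) (by omega) (by omega) hq hl' hr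
      exact ⟨d, hd, Relation.ReflTransGen.head h hrtg⟩
    · exact hw.2.1 p ⟨hp, by omega, hl, h⟩

lemma isdag_asymm {E : α → α → Prop} (h : ∀ a, ¬ Relation.TransGen E a a)
    {a b : α} (hab : E a b) : ¬ E b a := fun hba =>
  h a (Relation.TransGen.head hab (Relation.TransGen.single hba))

lemma rtg_map {E : α → α → Prop} {F : β → β → Prop} {f : α → β}
    (hsum : ∀ a b, E a b → f a = f b ∨ F (f a) (f b)) {a b : α}
    (h : Relation.ReflTransGen E a b) :
    Relation.ReflTransGen F (f a) (f b) := by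
  induction h with
  | refl => exact Relation.ReflTransGen.refl
  | tail hab hbc ih =>
    rcases hsum _ _ hbc with he | he
    · rwa [he] at ih
    · exact ih.tail he

/-- Splicing out a repeated vertex of an active walk gives an active walk. -/
lemma iwalk_splice {E : α → α → Prop} {Z : Set α} {m : ℕ} {w : ℕ → α}
    (hw : IWalk E Z m w) {i j : ℕ} (hij : i < j) (hj : j ≤ m) (heq : w i = w j) :
    IWalk E Z (m - (j - i)) (fun k => if k ≤ i then w k else w (k + (j - i))) := by
  set d := j - i with hd
  set m' := m - d with hm'
  set w' : ℕ → α := fun k => if k ≤ i then w k else w (k + d) with hw'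
  have him' : i ≤ m' := by omega
  have hval : ∀ k, i ≤ k → w' k = w (k + d) := by
    intro k hk
    rcases Nat.eq_or_lt_of_le hk with h | h
    · subst h
      simp only [hw', if_pos (le_refl i)]
      have : i + d = j := by omega
      rw [this, heq]
    · simp only [hw']
      rw [if_neg (by omega : ¬ k ≤ i)]
  have hvalle : ∀ k, k ≤ i → w' k = w k := by
    intro k hk; simp only [hw', if_pos hk]
  -- transfer of H2H for k < i
  have hlt : ∀ k, k < i → (H2H E m' w' k ↔ H2H E m w k) := by
    intro k hk
    have e1 : w' (k - 1) = w (k - 1) := hvalle _ (by omega)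
    have e2 : w' k = w k := hvalle _ (by omega)
    have e3 : w' (k + 1) = w (k + 1) := hvalle _ (by omega)
    constructor
    · rintro ⟨h0, hkm, hE1, hE2⟩
      rw [e1, e2] at hE1; rw [e3, e2] at hE2
      exact ⟨h0, by omega, hE1, hE2⟩
    · rintro ⟨h0, hkm, hE1, hE2⟩
      rw [← e1, ← e2] at hE1; rw [← e3, ← e2] at hE2
      exact ⟨h0, by omega, hE1, hE2⟩
  -- transfer of H2H for k > i
  have hgt : ∀ k, i < k → (H2H E m' w' k ↔ H2H E m w (k + d)) := by
    intro k hk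
    have e1 : w' (k - 1) = w (k + d - 1) := by
      rw [hval _ (by omega)]; congr 1; omega
    have e2 : w' k = w (k + d) := hval _ (by omega)
    have e3 : w' (k + 1) = w (k + d + 1) := by
      rw [hval _ (by omega)]; congr 1; omega
    constructor
    · rintro ⟨h0, hkm, hE1, hE2⟩
      rw [e1, e2] at hE1; rw [e3, e2] at hE2
      exact ⟨by omega, by omega, hE1, hE2⟩
    · rintro ⟨h0, hkm, hE1, hE2⟩
      rw [← e1, ← e2] at hE1; rw [← e3, ← e2] at hE2
      exact ⟨by omega, by omega, hE1, hE2⟩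
  refine ⟨?_, ?_, ?_⟩
  · -- edges
    intro k hk
    rcases lt_trichotomy k i with h | h | h
    · rw [hvalle _ (by omega), hvalle _ (by omega)]
      exact hw.1 k (by omega)
    · subst h
      rw [hvalle _ (le_refl _), hval _ (by omega), heq]
      have h1 : k + 1 + d = j + 1 := by omega
      rw [h1]
      exact hw.1 j (by omega)
    · rw [hval _ (by omega), hval _ (by omega)]
      have h1 : k + 1 + d = k + d + 1 := by omega
      rw [h1]
      exact hw.1 (k + d) (by omega)
  · -- head-to-head vertices have a descendant in Z
    intro k hk
    rcases lt_trichotomy k i with h | h | h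
    · rw [hvalle _ (by omega)]
      exact hw.2.1 k ((hlt k h).1 hk)
    · subst h
      obtain ⟨h0, hkm, hE1, hE2⟩ := hk
      rw [hvalle _ (by omega), hvalle _ (le_refl _)] at hE1
      rw [hval _ (by omega), hvalle _ (le_refl _), heq] at hE2
      have h1 : k + 1 + d = j + 1 := by omega
      rw [h1] at hE2
      have hE1' : E (w (k - 1)) (w k) := hE1
      rw [hvalle _ (le_refl _)]
      have hkj : k ≤ j := by omega
      have hjm : j < m := by omega
      exact iwalk_desc hw (j - k) k j rfl h0 hkj hjm hE1' hE2
    · rw [hval _ (by omega)]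
      exact hw.2.1 (k + d) ((hgt k h).1 hk)
  · -- non head-to-head vertices avoid Z
    intro k hk hnh
    rcases lt_trichotomy k i with h | h | h
    · rw [hvalle _ (by omega)]
      exact hw.2.2 k (by omega) (fun hc => hnh ((hlt k h).2 hc))
    · subst h
      rw [hvalle _ (le_refl _)]
      by_cases h0 : 0 < k
      · by_cases hkm : k < m'
        · by_cases hE1 : E (w (k - 1)) (w k)
          · -- then the right edge must fail
            have hE2 : ¬ E (w (j + 1)) (w j) := by
              intro hc
              apply hnh
              refine ⟨h0, hkm, ?_, ?_⟩
              · rw [hvalle _ (by omega), hvalle _ (le_refl _)]; exact hE1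
              · rw [hval _ (by omega), hvalle _ (le_refl _), heq]
                have h1 : k + 1 + d = j + 1 := by omega
                rw [h1]; exact hc
            have : w j ∉ Z := hw.2.2 j hj (fun hc => hE2 hc.2.2.2)
            rwa [heq]
          · exact hw.2.2 k (by omega) (fun hc => hE1 hc.2.2.1)
        · -- k = m', so j = m
          have hjm : j = m := by omega
          have : w m ∉ Z := hw.2.2 m (le_refl _) (fun hc => absurd hc.2.1 (lt_irrefl m))
          rw [heq, hjm]; exact this
      · have hk0 : k = 0 := by omega
        subst hk0
        exact hw.2.2 0 (by omega) (fun hc => by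
          obtain ⟨h0', _⟩ := hc; omega)
    · rw [hval _ (by omega)]
      exact hw.2.2 (k + d) (by omega) (fun hc => hnh ((hgt k h).2 hc))

/-- Every active walk can be reduced to one with pairwise distinct vertices. -/
lemma iwalk_nodup {E : α → α → Prop} {Z : Set α} :
    ∀ m, ∀ w : ℕ → α, IWalk E Z m w →
      ∃ (m' : ℕ) (w' : ℕ → α), IWalk E Z m' w' ∧ w' 0 = w 0 ∧ w' m' = w m ∧
        ∀ a b, a < b → b ≤ m' → w' a ≠ w' b := by
  intro m
  induction m using Nat.strong_induction_on with
  | _ m ih =>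
    intro w hw
    by_cases hdup : ∃ i j, i < j ∧ j ≤ m ∧ w i = w j
    · obtain ⟨i, j, hij, hj, heq⟩ := hdup
      have hsp := iwalk_splice hw hij hj heq
      set d := j - i with hd
      set m1 := m - d with hm1
      set w1 : ℕ → α := fun k => if k ≤ i then w k else w (k + d) with hw1
      have hm1lt : m1 < m := by omega
      obtain ⟨m', w', hw', h0, hm', hinj⟩ := ih m1 hm1lt w1 hsp
      refine ⟨m', w', hw', ?_, ?_, hinj⟩
      · rw [h0]; simp [hw1]
      · rw [hm']
        by_cases hcase : m1 ≤ i
        · have h1 : m1 = i := by omega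
          have h2 : j = m := by omega
          have h3 : w1 m1 = w m1 := if_pos hcase
          rw [h3, h1, heq, h2]
        · have h2 : m1 + d = m := by omega
          have h3 : w1 m1 = w (m1 + d) := if_neg hcase
          rw [h3, h2]
    · push_neg at hdup
      exact ⟨m, w, hw, rfl, rfl, hdup⟩

/-- Converting a vertex-distinct active walk into an active trail (as a list). -/
lemma iwalk_to_trail {E : α → α → Prop} {Z : Set α} {m : ℕ} {w : ℕ → α}
    (hw : IWalk E Z m w) (hinj : ∀ a b, a < b → b ≤ m → w a ≠ w b) :
    ∃ (xs : List α) (hne : xs ≠ []),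
      xs.head hne = w 0 ∧ xs.getLast hne = w m ∧ ActiveTrail E Z xs := by
  classical
  set xs : List α := (List.range (m + 1)).map w with hxs
  have hlen : xs.length = m + 1 := by simp [hxs]
  have hne : xs ≠ [] := by
    intro h; rw [h] at hlen; simp at hlen
  have hget : ∀ (k : ℕ) (hk : k < xs.length), xs[k] = w k := by
    intro k hk
    simp [hxs]
  have hh2h : ∀ k, HeadToHead E xs k ↔ H2H E m w k := by
    intro k
    constructor
    · rintro ⟨h0, h2, hE1, hE2⟩
      simp only [List.get_eq_getElem] at hE1 hE2
      rw [hget _ (by omega), hget _ (by omega)] at hE1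
      rw [hget _ h2, hget _ (by omega)] at hE2
      exact ⟨h0, by omega, hE1, hE2⟩
    · rintro ⟨h0, hkm, hE1, hE2⟩
      refine ⟨h0, by omega, ?_, ?_⟩
      · simp only [List.get_eq_getElem]
        rw [hget _ (by omega), hget _ (by omega)]; exact hE1
      · simp only [List.get_eq_getElem]
        rw [hget _ (by omega), hget _ (by omega)]; exact hE2
  refine ⟨xs, hne, ?_, ?_, ⟨⟨?_, ?_⟩, ?_⟩⟩
  · rw [List.head_eq_getElem, hget 0 (by omega)]
  · rw [List.getLast_eq_getElem, hget _ (by omega)]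
    congr 1; omega
  · -- chain'
    change List.IsChain _ xs
    rw [List.isChain_iff_getElem]
    intro k hk
    rw [hget _ (by omega), hget _ (by omega)]
    exact hw.1 k (by omega)
  · -- nodup of edges
    rw [List.nodup_iff_injective_get]
    intro a b hab
    have hlz : (xs.zip xs.tail).length = m := by
      simp [List.length_zip, hlen]
    have hmaplen : (((xs.zip xs.tail)).map (fun p => Sym2.mk p)).length = m := by
      simp [hlz]
    have hgete : ∀ (k : ℕ) (hk : k < (((xs.zip xs.tail)).map (fun p : α × α => Sym2.mk p)).length),
        (((xs.zip xs.tail)).map (fun p : α × α => Sym2.mk p)).get ⟨k, hk⟩ = Sym2.mk (w k, w (k + 1)) := by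
      intro k hk
      have hk' : k < m := by omega
      simp only [List.get_eq_getElem, List.getElem_map, List.getElem_zip, List.getElem_tail]
      rw [hget _ (by omega), hget _ (by omega)]
    have ha := hgete a.1 a.2
    have hb := hgete b.1 b.2
    rw [ha, hb] at hab
    have hab2 : ((w a.1, w (a.1 + 1)) : α × α) = (w b.1, w (b.1 + 1)) := by
      have := congrFun hab (w a.1, w (a.1 + 1))
      rcases Sym2.eq_iff.1 this with ⟨h1, _⟩ | ⟨_, h2⟩
      · exact h1
      · exact h2
    replace hab : s(w a.1, w (a.1 + 1)) = s(w b.1, w (b.1 + 1)) := by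
      simp only [Prod.mk.injEq] at hab2; rw [hab2.1, hab2.2]
    have ham : a.1 < m := by have := a.2; omega
    have hbm : b.1 < m := by have := b.2; omega
    have hblem : (b : ℕ) ≤ m := le_of_lt hbm
    have halem : (a : ℕ) ≤ m := le_of_lt ham
    have hb1 : (b : ℕ) + 1 ≤ m := by omega
    have ha1 : (a : ℕ) + 1 ≤ m := by omega
    rcases Sym2.eq_iff.1 hab with ⟨h1, h2⟩ | ⟨h1, h2⟩
    · -- w a = w b and w (a+1) = w (b+1)
      rcases lt_trichotomy a.1 b.1 with h | h | h
      · exact absurd h1 (hinj _ _ h hblem)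
      · exact Fin.ext h
      · exact absurd h1.symm (hinj _ _ h halem)
    · -- w a = w (b+1) and w (a+1) = w b
      rcases lt_trichotomy a.1 b.1 with h | h | h
      · exact absurd h1 (hinj _ _ (by omega) hb1)
      · have h' : (a : ℕ) = (b : ℕ) := h
        rw [← h'] at h1
        exact absurd h1 (hinj _ _ (by omega) ha1)
      · exact absurd h2.symm (hinj _ _ (by omega) ha1)
  · -- activity
    intro k hk
    constructor
    · intro hh
      simp only [List.get_eq_getElem]
      rw [hget _ hk]
      exact hw.2.1 k ((hh2h k).1 hh)
    · intro hh
      simp only [List.get_eq_getElem]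
      rw [hget _ hk]
      exact hw.2.2 k (by omega) (fun hc => hh ((hh2h k).2 hc))

/-- Converting an active trail (as a list) into an index-based active walk. -/
lemma trail_to_iwalk {E : α → α → Prop} {Z : Set α} {xs : List α}
    (hne : xs ≠ []) (h : ActiveTrail E Z xs) :
    IWalk E Z (xs.length - 1) (fun i => xs.getD i (xs.head hne)) := by
  set n := xs.length - 1 with hn
  have hlen : xs.length = n + 1 := by
    have : 0 < xs.length := List.length_pos_iff.2 hne
    omega
  set v : ℕ → α := fun i => xs.getD i (xs.head hne) with hv
  have hget : ∀ (k : ℕ) (hk : k < xs.length), v k = xs[k]'hk := by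
    intro k hk
    simp only [hv]
    exact List.getD_eq_getElem xs _ hk
  have hh2h : ∀ k, H2H E n v k ↔ HeadToHead E xs k := by
    intro k
    constructor
    · rintro ⟨h0, hkm, hE1, hE2⟩
      refine ⟨h0, by omega, ?_, ?_⟩
      · simp only [List.get_eq_getElem]
        rw [hget _ (by omega), hget _ (by omega)] at hE1; exact hE1
      · simp only [List.get_eq_getElem]
        rw [hget _ (by omega), hget _ (by omega)] at hE2; exact hE2
    · rintro ⟨h0, h2, hE1, hE2⟩
      simp only [List.get_eq_getElem] at hE1 hE2
      refine ⟨h0, by omega, ?_, ?_⟩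
      · rw [hget _ (by omega), hget _ (by omega)]; exact hE1
      · rw [hget _ (by omega), hget _ (by omega)]; exact hE2
  refine ⟨?_, ?_, ?_⟩
  · intro k hk
    have hch := List.isChain_iff_getElem.1 h.1.1
    have := hch k (by omega)
    rw [hget _ (by omega), hget _ (by omega)]
    exact this
  · intro k hh
    have hk : k < xs.length := by
      obtain ⟨_, hkm, _, _⟩ := hh; omega
    have := (h.2 k hk).1 ((hh2h k).1 hh)
    simp only [List.get_eq_getElem] at this
    rwa [hget _ (by omega)]
  · intro k hk hnh
    have hkl : k < xs.length := by omega
    have := (h.2 k hkl).2 (fun hc => hnh ((hh2h k).2 hc))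
    simp only [List.get_eq_getElem] at this
    rwa [hget _ hkl]

end AuxiliaryWalks

section Collapse

variable {α : Type*} {β : Type*}

/-- Collapsing an active walk in `G'` to an active walk in the summary DAG `H`. -/
lemma collapse (EG : α → α → Prop) (EH : β → β → Prop)
    (hH : IsDAG EH) (f : α → β)
    (hsum : ∀ a b, EG a b → f a = f b ∨ EH (f a) (f b))
    (Z : Set β) (n : ℕ) (v : ℕ → α) (hw : IWalk EG (f ⁻¹' Z) n v) :
    ∃ (m : ℕ) (w : ℕ → β), IWalk EH Z m w ∧ w 0 = f (v 0) ∧ w m = f (v n) := by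
  classical
  have hex : ∀ i : ℕ, ∃ j, j ∈ {j | i < j ∧ (n < j ∨ f (v j) ≠ f (v i))} :=
    fun i => ⟨n + i + 1, by constructor <;> [omega; exact Or.inl (by omega)]⟩
  set nxt : ℕ → ℕ := fun i => sInf {j | i < j ∧ (n < j ∨ f (v j) ≠ f (v i))} with hnxt
  have hnxt_mem : ∀ i, i < nxt i ∧ (n < nxt i ∨ f (v (nxt i)) ≠ f (v i)) :=
    fun i => Nat.sInf_mem (hex i)
  have hnxt_min : ∀ i j, i < j → j < nxt i → j ≤ n ∧ f (v j) = f (v i) := by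
    intro i j hij hj
    have h := Nat.notMem_of_lt_sInf (s := {j | i < j ∧ (n < j ∨ f (v j) ≠ f (v i))}) hj
    simp only [Set.mem_setOf_eq, not_and, not_or, not_not] at h
    have := h hij
    exact ⟨by omega, this.2⟩
  set r : ℕ → ℕ := fun k => Nat.rec 0 (fun _ ih => nxt ih) k with hr
  have hr0 : r 0 = 0 := rfl
  have hrs : ∀ k, r (k + 1) = nxt (r k) := fun k => rfl
  have hrlt : ∀ k, r k < r (k + 1) := by
    intro k; rw [hrs]; exact (hnxt_mem (r k)).1
  have hrge : ∀ k, k ≤ r k := by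
    intro k
    induction k with
    | zero => omega
    | succ k ih => have := hrlt k; omega
  have hmex : ∃ k, k ∈ {k | n < r (k + 1)} := ⟨n, by
    simp only [Set.mem_setOf_eq]
    have := hrge (n + 1); omega⟩
  set m : ℕ := sInf {k | n < r (k + 1)} with hm
  have hm1 : n < r (m + 1) := Nat.sInf_mem hmex
  have hm2 : ∀ k, k < m → r (k + 1) ≤ n := by
    intro k hk
    have := Nat.notMem_of_lt_sInf (s := {k | n < r (k + 1)}) hk
    simp only [Set.mem_setOf_eq, not_lt] at this
    exact this
  have hrle : ∀ k, k ≤ m → r k ≤ n := by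
    intro k hk
    match k with
    | 0 => rw [hr0]; omega
    | k + 1 => exact hm2 k (by omega)
  -- run constancy
  have hrun : ∀ k i, r k ≤ i → i < r (k + 1) → f (v i) = f (v (r k)) := by
    intro k i h1 h2
    rcases Nat.eq_or_lt_of_le h1 with h | h
    · rw [← h]
    · exact (hnxt_min (r k) i h (by rw [← hrs]; exact h2)).2
  -- boundary values differ
  have hbdne : ∀ k, r (k + 1) ≤ n → f (v (r (k + 1))) ≠ f (v (r k))  := by
    intro k hk
    rcases (hnxt_mem (r k)).2 with h | h
    · rw [← hrs] at h; omega
    · rw [hrs]; exact h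
  set w : ℕ → β := fun k => f (v (r (min k m))) with hwdef
  have hwk : ∀ k, k ≤ m → w k = f (v (r k)) := by
    intro k hk; simp only [hwdef, min_eq_left hk]
  -- boundary facts, for k < m, about the edge between run k and run k+1
  have hb_flo : ∀ k, k < m → f (v (r (k + 1) - 1)) = w k := by
    intro k hk
    rw [hwk k (by omega)]
    exact hrun k (r (k + 1) - 1) (by have := hrlt k; omega) (by have := hrlt k; omega)
  have hb_fhi : ∀ k, k < m → f (v (r (k + 1))) = w (k + 1) := by
    intro k hk; rw [hwk (k + 1) (by omega)]
  have hb_ne : ∀ k, k < m → f (v (r (k + 1))) ≠ f (v (r (k + 1) - 1)) := by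
    intro k hk
    have h1 := hbdne k (hrle (k + 1) (by omega))
    have h2 := hb_flo k hk
    have h3 := hwk k (by omega)
    rw [h2, h3]
    exact h1
  have hb_lt : ∀ k, k < m → r (k + 1) - 1 < n := by
    intro k hk
    have := hrle (k + 1) (by omega)
    have := hrlt k
    omega
  have hb_succ : ∀ k, (r (k + 1) - 1) + 1 = r (k + 1) := by
    intro k; have := hrlt k; omega
  -- the projected edge at each boundary
  have hbnd : ∀ k, k < m →
      (EG (v (r (k + 1) - 1)) (v (r (k + 1))) ∧ EH (w k) (w (k + 1))) ∨
      (EG (v (r (k + 1))) (v (r (k + 1) - 1)) ∧ EH (w (k + 1)) (w k)) := by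
    intro k hk
    have hedge := hw.1 (r (k + 1) - 1) (hb_lt k hk)
    rw [hb_succ k] at hedge
    rcases hedge with h | h
    · left
      refine ⟨h, ?_⟩
      rcases hsum _ _ h with he | he
      · exact absurd he.symm (hb_ne k hk)
      · rwa [hb_flo k hk, hb_fhi k hk] at he
    · right
      refine ⟨h, ?_⟩
      rcases hsum _ _ h with he | he
      · exact absurd he (hb_ne k hk)
      · rwa [hb_flo k hk, hb_fhi k hk] at he
  refine ⟨m, w, ⟨?_, ?_, ?_⟩, ?_, ?_⟩
  · -- edges of the collapsed walk
    intro k hk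
    rcases hbnd k hk with ⟨_, h⟩ | ⟨_, h⟩
    · exact Or.inl h
    · exact Or.inr h
  · -- head-to-head vertices have descendants in Z
    rintro k ⟨hk0, hkm, hE1, hE2⟩
    -- left boundary of run k
    have hkm1 : k - 1 < m := by omega
    have hbl := hbnd (k - 1) hkm1
    rw [show k - 1 + 1 = k from by omega] at hbl
    have hgl : EG (v (r k - 1)) (v (r k)) := by
      rcases hbl with ⟨h, _⟩ | ⟨_, h⟩
      · exact h
      · exact absurd hE1 (isdag_asymm hH h)
    -- right boundary of run k
    have hbr := hbnd k hkm
    have hgr : EG (v (r (k + 1))) (v (r (k + 1) - 1)) := by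
      rcases hbr with ⟨_, h⟩ | ⟨h, _⟩
      · exact absurd hE2 (isdag_asymm hH h)
      · exact h
    have hp0 : 0 < r k := by have := hrge k; omega
    have hpq : r k ≤ r (k + 1) - 1 := by have := hrlt k; omega
    have hqn : r (k + 1) - 1 < n := hb_lt k hkm
    have hgr' : EG (v ((r (k + 1) - 1) + 1)) (v (r (k + 1) - 1)) := by
      rw [hb_succ k]; exact hgr
    obtain ⟨d, hd, hrtg⟩ :=
      iwalk_desc hw ((r (k + 1) - 1) - r k) (r k) (r (k + 1) - 1) rfl hp0 hpq hqn hgl hgr'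
    refine ⟨f d, hd, ?_⟩
    have := rtg_map hsum hrtg
    rwa [← hwk k (by omega)] at this
  · -- non head-to-head vertices avoid Z
    intro k hk hnh
    by_cases hk0 : k = 0
    · subst hk0
      have : v 0 ∉ f ⁻¹' Z :=
        hw.2.2 0 (by omega) (fun hc => absurd hc.1 (lt_irrefl 0))
      rw [hwk 0 (by omega), hr0]
      exact this
    by_cases hkm : k = m
    · have hvn : v n ∉ f ⁻¹' Z :=
        hw.2.2 n (le_refl n) (fun hc => absurd hc.2.1 (lt_irrefl n))
      have hfeq : f (v n) = f (v (r m)) := hrun m n (hrle m (le_refl m)) hm1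
      rw [hkm, hwk m (le_refl m), ← hfeq]
      exact hvn
    -- interior vertex
    have hk0' : 0 < k := by omega
    have hkm' : k < m := by omega
    by_cases hE1 : EH (w (k - 1)) (w k)
    · -- then the right-in edge must fail
      have hE2 : ¬ EH (w (k + 1)) (w k) := by
        intro hc
        exact hnh ⟨hk0', hkm', hE1, hc⟩
      -- hence the G'-edge at the right boundary of run k points out of the run
      have hnr : ¬ EG (v (r (k + 1))) (v (r (k + 1) - 1)) := by
        intro hc
        rcases hsum _ _ hc with he | he
        · exact hb_ne k hkm' he
        · rw [hb_flo k hkm', hb_fhi k hkm'] at he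
          exact hE2 he
      have : v (r (k + 1) - 1) ∉ f ⁻¹' Z := by
        refine hw.2.2 (r (k + 1) - 1) (by have := hb_lt k hkm'; omega) (fun hc => ?_)
        have := hc.2.2.2
        rw [hb_succ k] at this
        exact hnr this
      rw [← hb_flo k hkm']
      exact this
    · -- the left-in edge fails
      have hkm1 : k - 1 < m := by omega
      have hnl : ¬ EG (v (r k - 1)) (v (r k)) := by
        intro hc
        rcases hsum _ _ hc with he | he
        · have := hb_ne (k - 1) hkm1
          rw [show k - 1 + 1 = k from by omega] at this
          exact this he.symm
        · have h1 := hb_flo (k - 1) hkm1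
          have h2 := hb_fhi (k - 1) hkm1
          rw [show k - 1 + 1 = k from by omega] at h1 h2
          rw [h1, h2] at he
          exact hE1 he
      have hrk1 : 0 < r k := by have := hrge k; omega
      have : v (r k) ∉ f ⁻¹' Z := by
        refine hw.2.2 (r k) (hrle k (by omega)) (fun hc => ?_)
        exact hnl hc.2.2.1
      rw [hwk k (by omega)]
      exact this
  · -- first endpoint
    rw [hwk 0 (by omega), hr0]
  · -- last endpoint
    rw [hwk m (le_refl m)]
    exact (hrun m n (hrle m (le_refl m)) hm1).symm

end Collapse

/-!
STATEMENT 9 (soundness of s-separation): Let `(H, f)` be a summary DAG for a DAG `G`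
(`H` is a DAG and `f : V(G) → V(H)` is a surjection such that every edge `(a,b)` of
`G` satisfies `f a = f b` or `(f a, f b) ∈ E(H)`), and let `X, Y, Z` be pairwise
disjoint subsets of `V(H)`.  If `X` and `Y` are d-separated by `Z` in `H`, then for
every causal DAG `G'` compatible with `(H, f)` the sets `f⁻¹(X)` and `f⁻¹(Y)` are
d-separated by `f⁻¹(Z)` in `G'`.
-/

theorem sSeparation_sound {α β : Type*} [Fintype α] [Fintype β]
    (EG : α → α → Prop) (EH : β → β → Prop)
    (hG : IsDAG EG) (hH : IsDAG EH)
    (f : α → β) (hf : Function.Surjective f)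
    (hsummary : ∀ a b, EG a b → f a = f b ∨ EH (f a) (f b))
    (X Y Z : Set β) (hXY : Disjoint X Y) (hXZ : Disjoint X Z) (hYZ : Disjoint Y Z)
    (hsep : DSeparated EH X Y Z) :
    ∀ EG' : α → α → Prop, IsDAG EG' →
      (∀ a b, EG' a b → f a = f b ∨ EH (f a) (f b)) →
      DSeparated EG' (f ⁻¹' X) (f ⁻¹' Y) (f ⁻¹' Z) := by
  intro EG' hG' hsum' hcon
  obtain ⟨xs, hne, hhd, hlast, htrail⟩ := hcon
  have hlen : 0 < xs.length := List.length_pos_iff.2 hne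
  have hiw := trail_to_iwalk hne htrail
  set n := xs.length - 1 with hn
  set v : ℕ → α := fun i => xs.getD i (xs.head hne) with hv
  have hv0 : v 0 = xs.head hne := by
    simp only [hv]
    rw [List.getD_eq_getElem xs _ (by omega), List.head_eq_getElem]
  have hvn : v n = xs.getLast hne := by
    simp only [hv]
    rw [List.getD_eq_getElem xs _ (by omega), List.getLast_eq_getElem]
  obtain ⟨m, w, hw, h0, hm⟩ := collapse EG' EH hH f hsum' Z n v hiw
  obtain ⟨m', w', hw', e0, em, hinj⟩ := iwalk_nodup m w hw
  obtain ⟨ys, hne', hh, hl, htr⟩ := iwalk_to_trail hw' hinj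
  refine hsep ⟨ys, hne', ?_, ?_, htr⟩
  · rw [hh, e0, h0, hv0]
    exact hhd
  · rw [hl, em, hm, hvn]
    exact hlast


end CausalDAGSummary
end

section
/- Let (H,f) be a summary DAG for a DAG G, and let X, Y, Z be pairwise disjoint subsets of V(H). If X and Y are d-connected given Z in H, then there exists a DAG G' compatible with (H,f) such that f^{-1}(X) and f^{-1}(Y) are d-connected given f^{-1}(Z) in G' (completeness of s-separation). -/
namespace CausalDAGSummary

variable {α : Type*}

/-!
STATEMENT 10 (completeness of s-separation): Let `(H, f)` be a summary DAG for a DAG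
`G`, and let `X, Y, Z` be pairwise disjoint subsets of `V(H)`.  If `X` and `Y` are
d-connected given `Z` in `H`, then there exists a DAG `G'` compatible with `(H, f)`
such that `f⁻¹(X)` and `f⁻¹(Y)` are d-connected given `f⁻¹(Z)` in `G'`.
-/

theorem sSeparation_complete {α β : Type*} [Fintype α] [Fintype β]
    (EG : α → α → Prop) (EH : β → β → Prop)
    (hG : IsDAG EG) (hH : IsDAG EH)
    (f : α → β) (hf : Function.Surjective f)
    (hsummary : ∀ a b, EG a b → f a = f b ∨ EH (f a) (f b))
    (X Y Z : Set β) (hXY : Disjoint X Y) (hXZ : Disjoint X Z) (hYZ : Disjoint Y Z)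
    (hconn : DConnected EH X Y Z) :
    ∃ EG' : α → α → Prop, IsDAG EG' ∧
      (∀ a b, EG' a b → f a = f b ∨ EH (f a) (f b)) ∧
      DConnected EG' (f ⁻¹' X) (f ⁻¹' Y) (f ⁻¹' Z) := by
  classical
  set g : β → α := Function.surjInv hf with hg
  have hfg : ∀ b, f (g b) = b := fun b => Function.surjInv_eq hf b
  have hginj : Function.Injective g := Function.injective_surjInv hf
  refine ⟨fun a b => EH (f a) (f b), ?_, fun a b h => Or.inr h, ?_⟩
  · intro a hcyc
    exact hH (f a) (Relation.TransGen.lift f (fun _ _ h => h) a a hcyc)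
  obtain ⟨xs, hne, hhead, hlast, htrail, hact⟩ := hconn
  refine ⟨xs.map g, by simpa using hne, ?_, ?_, ⟨?_, ?_⟩, ?_⟩
  · rw [List.head_map]
    simpa [Set.mem_preimage, hfg] using hhead
  · rw [List.getLast_map]
    simpa [Set.mem_preimage, hfg] using hlast
  · rw [List.Chain', List.isChain_map]
    exact List.IsChain.imp (fun a b h => by simpa [hfg] using h) htrail.1
  · have hmkα : Function.Injective (fun p : α × α => Sym2.mk p) := by
      intro p q h
      rcases Sym2.eq_iff.1 (congrFun h p) with ⟨h1, _⟩ | ⟨_, h2⟩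
      · exact h1
      · exact h2
    have hmkβ : Function.Injective (fun p : β × β => Sym2.mk p) := by
      intro p q h
      rcases Sym2.eq_iff.1 (congrFun h p) with ⟨h1, _⟩ | ⟨_, h2⟩
      · exact h1
      · exact h2
    rw [List.nodup_map_iff hmkα, ← List.map_tail, List.zip_map]
    exact ((List.nodup_map_iff hmkβ).1 htrail.2).map (Function.Injective.prodMap hginj hginj)
  · intro i hi
    have hlen : (xs.map g).length = xs.length := xs.length_map g
    have hi' : i < xs.length := by simpa [hlen] using hi
    have hget : ∀ (j : ℕ) (hj : j < xs.length),
        (xs.map g).get ⟨j, by simpa [hlen] using hj⟩ = g (xs.get ⟨j, hj⟩) := by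
      intro j hj; simp
    have hhh2 : HeadToHead (fun a b => EH (f a) (f b)) (xs.map g) i ↔
        HeadToHead EH xs i := by
      constructor
      · rintro ⟨h1, h2, e1, e2⟩
        simp only [List.get_eq_getElem, List.getElem_map, hfg] at e1 e2
        exact ⟨h1, by simpa [hlen] using h2, e1, e2⟩
      · rintro ⟨h1, h2, e1, e2⟩
        refine ⟨h1, by simpa [hlen] using h2, ?_, ?_⟩ <;>
          simp only [List.get_eq_getElem, List.getElem_map, hfg] <;> assumption
    constructor
    · intro hh
      obtain ⟨d, hdZ, hdesc⟩ := (hact i hi').1 (hhh2.mp hh)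
      refine ⟨g d, by simpa [Set.mem_preimage, hfg] using hdZ, ?_⟩
      have : Relation.ReflTransGen (fun a b => EH (f a) (f b)) (g (xs.get ⟨i, hi'⟩)) (g d) :=
        Relation.ReflTransGen.lift g (fun a b h => by simpa [Function.onFun, hfg] using h) _ _ hdesc
      simpa [List.get_eq_getElem, List.getElem_map] using this
    · intro hh
      have := (hact i hi').2 (fun h => hh (hhh2.mpr h))
      simpa [Set.mem_preimage, List.get_eq_getElem, List.getElem_map, hfg] using this

end CausalDAGSummary
end

section
/- Let (H,f) be a summary DAG for a DAG G, and let X, Y, W, Z be pairwise disjoint subsets of V(H). If Y is d-connected to Z given X union W in the mutilated graph H_{X-bar} (obtained from H by removing all edges entering X), then there exists a causal DAG G' compatible with (H,f) such that f^{-1}(Y) is d-connected to f^{-1}(Z) given f^{-1}(X union W) in the mutilated graph G'_{f^{-1}(X)-bar} (completeness of do-calculus in summary causal DAGs). -/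
namespace CausalDAGSummary

variable {α : Type*}

/-- The edge relation of the mutilated graph `D_{X̄}`: all edges entering vertices
of `X` are removed. -/
def mutilateIn (E : α → α → Prop) (X : Set α) : α → α → Prop := fun a b =>
  E a b ∧ b ∉ X

/-!
STATEMENT 16 (completeness of do-calculus in summary causal DAGs): Let `(H, f)` be a
summary DAG for a DAG `G`, and let `X, Y, W, Z` be pairwise disjoint subsets of
`V(H)`.  If `Y` is d-connected to `Z` given `X ∪ W` in the mutilated graph `H_{X̄}`,
then there exists a causal DAG `G'` compatible with `(H, f)` such that `f⁻¹(Y)` is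
d-connected to `f⁻¹(Z)` given `f⁻¹(X ∪ W)` in the mutilated graph `G'_{f⁻¹(X)‾}`.
-/

theorem doCalculus_complete_summary {α β : Type*} [Fintype α] [Fintype β]
    (EG : α → α → Prop) (EH : β → β → Prop)
    (hG : IsDAG EG) (hH : IsDAG EH)
    (f : α → β) (hf : Function.Surjective f)
    (hsummary : ∀ a b, EG a b → f a = f b ∨ EH (f a) (f b))
    (X Y W Z : Set β)
    (hXY : Disjoint X Y) (hXW : Disjoint X W) (hXZ : Disjoint X Z)
    (hYW : Disjoint Y W) (hYZ : Disjoint Y Z) (hWZ : Disjoint W Z)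
    (hconn : DConnected (mutilateIn EH X) Y Z (X ∪ W)) :
    ∃ EG' : α → α → Prop, IsDAG EG' ∧
      (∀ a b, EG' a b → f a = f b ∨ EH (f a) (f b)) ∧
      DConnected (mutilateIn EG' (f ⁻¹' X)) (f ⁻¹' Y) (f ⁻¹' Z) (f ⁻¹' (X ∪ W)) := by
  classical
  set g : β → α := Function.surjInv hf with hg
  have hfg : ∀ b, f (g b) = b := fun b => Function.surjInv_eq hf b
  have hginj : Function.Injective g := Function.injective_surjInv hf
  set EG' : α → α → Prop := fun a b => ∃ u v, EH u v ∧ a = g u ∧ b = g v with hEG'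
  have hsum' : ∀ a b, EG' a b → EH (f a) (f b) := by
    rintro a b ⟨u, v, huv, rfl, rfl⟩
    simpa [hfg] using huv
  -- key correspondence between mutilated edges
  have hE : ∀ u v, mutilateIn EG' (f ⁻¹' X) (g u) (g v) ↔ mutilateIn EH X u v := by
    intro u v
    constructor
    · rintro ⟨⟨u', v', huv, e1, e2⟩, hvx⟩
      obtain rfl := hginj e1
      obtain rfl := hginj e2
      exact ⟨huv, by simpa [Set.mem_preimage, hfg] using hvx⟩
    · rintro ⟨huv, hvx⟩
      exact ⟨⟨u, v, huv, rfl, rfl⟩, by simpa [Set.mem_preimage, hfg] using hvx⟩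
  refine ⟨EG', ?_, fun a b hab => Or.inr (hsum' a b hab), ?_⟩
  · -- DAG
    intro a hcyc
    exact hH (f a) (hcyc.lift f hsum')
  · obtain ⟨xs, hne, hhead, hlast, ⟨⟨hchain, hnd⟩, hact⟩⟩ := hconn
    have hlen : (xs.map g).length = xs.length := by simp
    have hget : ∀ (i : ℕ) (hi : i < (xs.map g).length),
        (xs.map g).get ⟨i, hi⟩ = g (xs.get ⟨i, by simpa using hi⟩) := by
      intro i hi; simp
    have hhh : ∀ i, HeadToHead (mutilateIn EG' (f ⁻¹' X)) (xs.map g) i ↔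
        HeadToHead (mutilateIn EH X) xs i := by
      intro i
      unfold HeadToHead
      constructor
      · rintro ⟨h1, h2, e1, e2⟩
        rw [hget, hget] at e1
        rw [hget, hget] at e2
        exact ⟨h1, by simpa using h2, (hE _ _).1 e1, (hE _ _).1 e2⟩
      · rintro ⟨h1, h2, e1, e2⟩
        refine ⟨h1, by simpa using h2, ?_, ?_⟩
        · rw [hget, hget]; exact (hE _ _).2 e1
        · rw [hget, hget]; exact (hE _ _).2 e2
    have hrt : ∀ u d, Relation.ReflTransGen (mutilateIn EH X) u d →
        Relation.ReflTransGen (mutilateIn EG' (f ⁻¹' X)) (g u) (g d) := by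
      intro u d h
      induction h with
      | refl => exact Relation.ReflTransGen.refl
      | tail _ h2 ih => exact ih.tail ((hE _ _).2 h2)
    refine ⟨xs.map g, by simpa using hne, ?_, ?_, ⟨⟨?_, ?_⟩, ?_⟩⟩
    · rw [List.head_map]
      simp [Set.mem_preimage, hfg, hhead]
    · rw [List.getLast_map]
      simp [Set.mem_preimage, hfg, hlast]
    · unfold List.Chain' at hchain ⊢
      rw [List.isChain_map]
      refine hchain.imp ?_
      intro a b hab
      exact hab.imp ((hE _ _).2) ((hE _ _).2)
    · have hzip : (xs.map g).zip (xs.map g).tail = (xs.zip xs.tail).map (Prod.map g g) := by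
        rw [← List.map_tail, List.zip_map]
      rw [hzip, List.map_map]
      have hinjα : Function.Injective (fun p : α × α => Sym2.mk p) := by
        intro p p' h
        rcases Sym2.eq_iff.1 (congrFun h p) with ⟨h1, -⟩ | ⟨-, h2⟩
        · exact h1
        · exact h2
      have hinjβ : Function.Injective (fun p : β × β => Sym2.mk p) := by
        intro p p' h
        rcases Sym2.eq_iff.1 (congrFun h p) with ⟨h1, -⟩ | ⟨-, h2⟩
        · exact h1
        · exact h2
      rw [← List.map_map, List.nodup_map_iff hinjα]
      exact ((List.nodup_map_iff hinjβ).1 hnd).map (hginj.prodMap hginj)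
    · intro i hi
      have hi' : i < xs.length := by simpa using hi
      obtain ⟨ha1, ha2⟩ := hact i hi'
      constructor
      · intro hh
        obtain ⟨d, hdZ, hdpath⟩ := ha1 ((hhh i).1 hh)
        refine ⟨g d, by simpa [Set.mem_preimage, hfg] using hdZ, ?_⟩
        rw [hget]
        exact hrt _ _ hdpath
      · intro hh
        rw [hget]
        have := ha2 (fun h => hh ((hhh i).2 h))
        simpa [Set.mem_preimage, hfg] using this

end CausalDAGSummary
end
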